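/- arXiv:2204.11071 — 5 statements merged into one kernel-verified Lean document; each statement's English description precedes it below -/
import Mathlib

section
/- Let F ∈ ℝ^{3×3} be the Fisher information matrix defined in the context, built from complex square matrices B, Ḃ ∈ ℂ^{M×M}, a Hermitian positive semidefinite matrix Rx ∈ ℂ^{M×M}, α ∈ ℂ with α ≠ 0, a positive integer T, and σ² > 0. Suppose d := tr(B Rx B^H) > 0 and s := tr(Ḃ Rx Ḃ^H) − |tr(B Rx Ḃ^H)|²/d > 0 (both quantities tr(B Rx B^H) and tr(Ḃ Rx Ḃ^H) are real since Rx is Hermitian). Then F is invertible and the (1,1) entry of F^{-1} equals σ²/(2T|α|² s). (Lemma 1: closed-form CRLB for DoA estimation.) -/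
open Matrix
open scoped ComplexOrder

/-- The Fisher information matrix `F ∈ ℝ^{3×3}` for the parameter vector
`ξ = (θ, Re α, Im α)`, built from `B`, `Ḃ`, the transmit covariance `Rx`,
the channel coefficient `α`, the dwell time `T`, and the noise power `σ²`. -/
noncomputable def FIM {M : ℕ} (B Bdot Rx : Matrix (Fin M) (Fin M) ℂ)
    (α : ℂ) (T : ℕ) (σ2 : ℝ) : Matrix (Fin 3) (Fin 3) ℝ :=
  !![2 * T * ‖α‖ ^ 2 / σ2 * (Matrix.trace (Bdot * Rx * Bdotᴴ)).re,
     2 * T / σ2 * ((starRingEnd ℂ) α * Matrix.trace (B * Rx * Bdotᴴ)).re,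
     -(2 * T / σ2 * ((starRingEnd ℂ) α * Matrix.trace (B * Rx * Bdotᴴ)).im);
     2 * T / σ2 * ((starRingEnd ℂ) α * Matrix.trace (B * Rx * Bdotᴴ)).re,
     2 * T / σ2 * (Matrix.trace (B * Rx * Bᴴ)).re,
     0;
     -(2 * T / σ2 * ((starRingEnd ℂ) α * Matrix.trace (B * Rx * Bdotᴴ)).im),
     0,
     2 * T / σ2 * (Matrix.trace (B * Rx * Bᴴ)).re]

/-- Lemma 1: closed-form CRLB for DoA estimation. -/
theorem crlb_closed_form {M : ℕ} (B Bdot Rx : Matrix (Fin M) (Fin M) ℂ)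
    (hRxH : Rx.IsHermitian) (hRx : Rx.PosSemidef)
    (α : ℂ) (hα : α ≠ 0) (T : ℕ) (hT : 0 < T) (σ2 : ℝ) (hσ2 : 0 < σ2)
    (d s : ℝ)
    (hd : d = (Matrix.trace (B * Rx * Bᴴ)).re) (hd0 : 0 < d)
    (hs : s = (Matrix.trace (Bdot * Rx * Bdotᴴ)).re
          - ‖Matrix.trace (B * Rx * Bdotᴴ)‖ ^ 2 / d)
    (hs0 : 0 < s) :
    IsUnit (FIM B Bdot Rx α T σ2) ∧
      (FIM B Bdot Rx α T σ2)⁻¹ 0 0 = σ2 / (2 * T * ‖α‖ ^ 2 * s) := by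
  set r : ℝ := (Matrix.trace (Bdot * Rx * Bdotᴴ)).re with hr
  set t : ℂ := Matrix.trace (B * Rx * Bdotᴴ) with ht
  set u : ℝ := ((starRingEnd ℂ) α * t).re with hu
  set v : ℝ := ((starRingEnd ℂ) α * t).im with hv
  set A : ℝ := ‖α‖ ^ 2 with hA
  have hA0 : 0 < A := by
    have := norm_pos_iff.mpr hα
    positivity
  have hk0 : (0:ℝ) < 2 * T / σ2 := by positivity
  -- u² + v² = A * |t|²
  have habs : u ^ 2 + v ^ 2 = A * ‖t‖ ^ 2 := by
    have h1 : ‖(starRingEnd ℂ) α * t‖ ^ 2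
        = u ^ 2 + v ^ 2 := by
      rw [Complex.sq_norm, Complex.normSq_apply]; ring
    rw [← h1, norm_mul, Complex.norm_conj, mul_pow, hA]
  have ht2 : ‖t‖ ^ 2 = (r - s) * d := by
    have := hs
    field_simp at this
    linarith
  have huv : u ^ 2 + v ^ 2 = A * ((r - s) * d) := by rw [habs, ht2]
  -- explicit form of FIM
  have hFIM : FIM B Bdot Rx α T σ2
      = !![2 * T / σ2 * A * r, 2 * T / σ2 * u, -(2 * T / σ2 * v);
           2 * T / σ2 * u, 2 * T / σ2 * d, 0;
           -(2 * T / σ2 * v), 0, 2 * T / σ2 * d] := by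
    rw [FIM, ← hr, ← ht, ← hu, ← hv, ← hd]
    congr 1
    rw [hA]; ring
  -- determinant
  have hdet : (FIM B Bdot Rx α T σ2).det
      = (2 * T / σ2) ^ 3 * A * s * d ^ 2 := by
    rw [hFIM]
    simp [Matrix.det_fin_three]
    linear_combination (-((2 * (T:ℝ) / σ2) ^ 3 * d)) * huv
  have hdet0 : (FIM B Bdot Rx α T σ2).det ≠ 0 := by
    rw [hdet]; positivity
  have hUnit : IsUnit (FIM B Bdot Rx α T σ2) := by
    rw [Matrix.isUnit_iff_isUnit_det]
    exact isUnit_iff_ne_zero.mpr hdet0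
  refine ⟨hUnit, ?_⟩
  rw [Matrix.inv_def, Ring.inverse_eq_inv']
  have hadj : (FIM B Bdot Rx α T σ2).adjugate 0 0 = ((2 * T / σ2) * d) ^ 2 := by
    rw [hFIM, Matrix.adjugate_fin_three]
    simp [Matrix.vecHead, Matrix.vecTail]
    ring
  simp only [Matrix.smul_apply, smul_eq_mul, hadj, hdet]
  have h2T : (0:ℝ) < 2 * T := by positivity
  rw [hA] at hA0 ⊢
  field_simp
end

section
/- With b = G^T A v, κ = j·2π·(d/λ)·cos(θ), ḃ = κ·G^T A D v, B = b b^T, Ḃ = ḃ b^T + b ḃ^T, R1 = A^H G* G^T A, R2 = A^H G* Rx* G^T A, suppose p := v^H R1 v > 0 and q := v^H R2 v > 0 (these are real since R1, R2 are Hermitian). Then tr(Ḃ Rx Ḃ^H) − |tr(B Rx Ḃ^H)|²/tr(B Rx B^H) = (4π² d² cos²θ / λ²) · [ q·( v^H D R1 D v − |v^H D R1 v|²/p ) + p·( v^H D R2 D v − |v^H D R2 v|²/q ) ]. (This is the identity underlying the closed-form CRLB expression in terms of the reflective beamforming vector v, Eq. (11).) -/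
open Matrix
open scoped ComplexOrder

section Helpers

variable {m n : Type*} [Fintype m] [Fintype n]

private lemma my_vecMulVec_mul (x : m → ℂ) (y : m → ℂ) (R : Matrix m n ℂ) :
    vecMulVec x y * R = vecMulVec x (y ᵥ* R) := by
  ext i k
  simp [mul_apply, vecMulVec_apply, vecMul, dotProduct, Finset.mul_sum, mul_assoc]

private lemma my_vecMul_vecMulVec (w : m → ℂ) (a : m → ℂ) (c : n → ℂ) :
    w ᵥ* vecMulVec a c = (w ⬝ᵥ a) • c := by
  ext k
  simp [vecMul, vecMulVec_apply, dotProduct, Finset.sum_mul, mul_assoc]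

private lemma my_trace_vecMulVec (x y : m → ℂ) :
    Matrix.trace (vecMulVec x y) = y ⬝ᵥ x := by
  simp [Matrix.trace, Matrix.diag, vecMulVec_apply, dotProduct, mul_comm]

private lemma my_vecMulVec_conjT (y1 : m → ℂ) (y2 : n → ℂ) :
    (vecMulVec y1 y2)ᴴ = vecMulVec (star y2) (star y1) := by
  ext i j
  simp [conjTranspose_apply, vecMulVec_apply, mul_comm]

private lemma tr_helper (R : Matrix m m ℂ) (x1 x2 y1 y2 : m → ℂ) :
    Matrix.trace (vecMulVec x1 x2 * R * (vecMulVec y1 y2)ᴴ) =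
      (x2 ⬝ᵥ R *ᵥ star y2) * (star y1 ⬝ᵥ x1) := by
  rw [my_vecMulVec_conjT, Matrix.mul_assoc, my_vecMulVec_mul, my_trace_vecMulVec,
    ← Matrix.vecMul_vecMul, my_vecMul_vecMulVec, smul_dotProduct, ← Matrix.dotProduct_mulVec]
  rw [smul_eq_mul]

private lemma my_star_mulVec (X : Matrix m n ℂ) (v : n → ℂ) :
    star (X *ᵥ v) = X.map (starRingEnd ℂ) *ᵥ star v := by
  ext i
  simp [mulVec, dotProduct, map_sum, mul_comm]

private lemma my_dot_mulVec_left (X : Matrix m n ℂ) (v : n → ℂ) (z : m → ℂ) :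
    (X *ᵥ v) ⬝ᵥ z = v ⬝ᵥ Xᵀ *ᵥ z := by
  rw [dotProduct_comm, dotProduct_mulVec, ← Matrix.mulVec_transpose, dotProduct_comm]

private lemma my_star_quad (X : Matrix n n ℂ) (v w : n → ℂ) :
    v ⬝ᵥ X *ᵥ star w = star (star v ⬝ᵥ X.map (starRingEnd ℂ) *ᵥ w) := by
  simp only [dotProduct, mulVec, Finset.mul_sum, star_sum, star_mul', star_star,
    Pi.star_apply, Matrix.map_apply]
  exact Finset.sum_congr rfl fun i _ => Finset.sum_congr rfl fun j _ => by
    simp only [starRingEnd_apply, star_star]; try ring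

private lemma my_transpose_map_star (X : Matrix m n ℂ) :
    Xᵀ.map (starRingEnd ℂ) = Xᴴ := by
  ext i j; simp

private lemma core_s (Mx My : Matrix m n ℂ) (v w : n → ℂ) :
    star (Mx *ᵥ v) ⬝ᵥ (My *ᵥ w) = star v ⬝ᵥ (Mxᴴ * My) *ᵥ w := by
  rw [star_mulVec, ← dotProduct_mulVec, mulVec_mulVec]

private lemma core_r (Mx My : Matrix m n ℂ) (R : Matrix m m ℂ) (v : n → ℂ) :
    (Mx *ᵥ v) ⬝ᵥ R *ᵥ star (My *ᵥ v)
      = star (star v ⬝ᵥ (Mxᴴ * R.map (starRingEnd ℂ) * My) *ᵥ v) := by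
  rw [my_star_mulVec, mulVec_mulVec, my_dot_mulVec_left, mulVec_mulVec, my_star_quad]
  congr 2
  rw [Matrix.map_mul, Matrix.map_mul, my_transpose_map_star]
  have h : (My.map (starRingEnd ℂ)).map (starRingEnd ℂ) = My := by ext i j; simp
  rw [h, ← Matrix.mul_assoc]

private lemma quad_conj (X : Matrix n n ℂ) (v : n → ℂ) :
    star (star v ⬝ᵥ X *ᵥ v) = star v ⬝ᵥ Xᴴ *ᵥ v := by
  simp only [dotProduct, mulVec, Finset.mul_sum, star_sum, star_mul', star_star,
    Pi.star_apply, conjTranspose_apply]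
  rw [Finset.sum_comm]
  exact Finset.sum_congr rfl fun i _ => Finset.sum_congr rfl fun j _ => by ring

end Helpers

/-- The identity underlying Eq. (11): the CRLB denominator
`tr(Ḃ Rx Ḃᴴ) − |tr(B Rx Ḃᴴ)|²/tr(B Rx Bᴴ)` expressed via the reflective
beamforming vector `v`, with `b = Gᵀ A v`, `ḃ = κ Gᵀ A D v`,
`κ = j·2π·(d/λ)·cos θ`, `B = b bᵀ`, `Ḃ = ḃ bᵀ + b ḃᵀ`,
`R1 = Aᴴ G* Gᵀ A`, `R2 = Aᴴ G* Rx* Gᵀ A`. -/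
theorem crlb_reflective_identity {N M : ℕ} (d lmb θ : ℝ) (hd : 0 < d) (hlmb : 0 < lmb)
    (a : Fin N → ℂ)
    (ha : ∀ n : Fin N, a n =
      Complex.exp (Complex.I * (2 * Real.pi * (n : ℕ) * d * Real.sin θ / lmb)))
    (v : Fin N → ℂ) (G : Matrix (Fin N) (Fin M) ℂ)
    (Rx : Matrix (Fin M) (Fin M) ℂ) (hRxH : Rx.IsHermitian) (hRx : Rx.PosSemidef)
    (A D : Matrix (Fin N) (Fin N) ℂ)
    (hA : A = Matrix.diagonal a)
    (hD : D = Matrix.diagonal (fun n : Fin N => ((n : ℕ) : ℂ)))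
    (κ : ℂ) (hκ : κ = Complex.I * (2 * Real.pi * (d / lmb) * Real.cos θ))
    (b bdot : Fin M → ℂ)
    (hb : b = (Gᵀ * A).mulVec v)
    (hbdot : bdot = κ • (Gᵀ * A * D).mulVec v)
    (B Bdot : Matrix (Fin M) (Fin M) ℂ)
    (hB : B = Matrix.vecMulVec b b)
    (hBdot : Bdot = Matrix.vecMulVec bdot b + Matrix.vecMulVec b bdot)
    (R1 R2 : Matrix (Fin N) (Fin N) ℂ)
    (hR1 : R1 = Aᴴ * G.map (starRingEnd ℂ) * Gᵀ * A)
    (hR2 : R2 = Aᴴ * G.map (starRingEnd ℂ) * Rx.map (starRingEnd ℂ) * Gᵀ * A)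
    (p q : ℝ)
    (hp : p = (star v ⬝ᵥ R1.mulVec v).re) (hp0 : 0 < p)
    (hq : q = (star v ⬝ᵥ R2.mulVec v).re) (hq0 : 0 < q) :
    (Matrix.trace (Bdot * Rx * Bdotᴴ)).re
      - ‖Matrix.trace (B * Rx * Bdotᴴ)‖ ^ 2
        / (Matrix.trace (B * Rx * Bᴴ)).re
    = (4 * Real.pi ^ 2 * d ^ 2 * Real.cos θ ^ 2 / lmb ^ 2) *
        (q * ((star v ⬝ᵥ (D * R1 * D).mulVec v).re
                - ‖star v ⬝ᵥ (D * R1).mulVec v‖ ^ 2 / p)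
         + p * ((star v ⬝ᵥ (D * R2 * D).mulVec v).re
                - ‖star v ⬝ᵥ (D * R2).mulVec v‖ ^ 2 / q)) := by
  -- basic conjugate-transpose facts
  have hGH : (Gᵀ)ᴴ = G.map (starRingEnd ℂ) := by
    ext i j; simp [conjTranspose_apply]
  have hGmH : (G.map (starRingEnd ℂ))ᴴ = Gᵀ := by
    ext i j; simp [conjTranspose_apply]
  have hDH : Dᴴ = D := by
    rw [hD]; ext i j
    simp [conjTranspose_apply, Matrix.diagonal_apply, eq_comm]
    split <;> simp_all
  have hRxmH : (Rx.map (starRingEnd ℂ))ᴴ = Rx.map (starRingEnd ℂ) := by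
    ext i j
    simp only [conjTranspose_apply, Matrix.map_apply, starRingEnd_apply, star_star]
    exact ((congrFun (congrFun hRxH j) i)).symm
  have hermR1 : R1ᴴ = R1 := by
    rw [hR1]
    simp only [conjTranspose_mul, conjTranspose_conjTranspose, hGH, hGmH, Matrix.mul_assoc]
  have hermR2 : R2ᴴ = R2 := by
    rw [hR2]
    simp only [conjTranspose_mul, conjTranspose_conjTranspose, hGH, hGmH, hRxmH,
      Matrix.mul_assoc]
  -- matrix product identities
  have f1 : (Gᵀ * A)ᴴ * (Gᵀ * A) = R1 := by
    rw [hR1, conjTranspose_mul, hGH]; simp only [Matrix.mul_assoc]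
  have f2 : (Gᵀ * A)ᴴ * (Gᵀ * A * D) = R1 * D := by
    rw [hR1, conjTranspose_mul, hGH]; simp only [Matrix.mul_assoc]
  have f3 : (Gᵀ * A * D)ᴴ * (Gᵀ * A) = D * R1 := by
    rw [hR1, conjTranspose_mul, conjTranspose_mul, hGH, hDH]; simp only [Matrix.mul_assoc]
  have f4 : (Gᵀ * A * D)ᴴ * (Gᵀ * A * D) = D * R1 * D := by
    rw [hR1, conjTranspose_mul, conjTranspose_mul, hGH, hDH]; simp only [Matrix.mul_assoc]
  have g1 : (Gᵀ * A)ᴴ * Rx.map (starRingEnd ℂ) * (Gᵀ * A) = R2 := by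
    rw [hR2, conjTranspose_mul, hGH]; simp only [Matrix.mul_assoc]
  have g2 : (Gᵀ * A)ᴴ * Rx.map (starRingEnd ℂ) * (Gᵀ * A * D) = R2 * D := by
    rw [hR2, conjTranspose_mul, hGH]; simp only [Matrix.mul_assoc]
  have g3 : (Gᵀ * A * D)ᴴ * Rx.map (starRingEnd ℂ) * (Gᵀ * A) = D * R2 := by
    rw [hR2, conjTranspose_mul, conjTranspose_mul, hGH, hDH]; simp only [Matrix.mul_assoc]
  have g4 : (Gᵀ * A * D)ᴴ * Rx.map (starRingEnd ℂ) * (Gᵀ * A * D) = D * R2 * D := by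
    rw [hR2, conjTranspose_mul, conjTranspose_mul, hGH, hDH]; simp only [Matrix.mul_assoc]
  -- scalar quantities
  set P1 : ℂ := star v ⬝ᵥ (D * R1) *ᵥ v with hP1
  set Q1 : ℂ := star v ⬝ᵥ (D * R2) *ᵥ v with hQ1
  set p11 : ℝ := (star v ⬝ᵥ (D * R1 * D) *ᵥ v).re with hp11
  set q11 : ℝ := (star v ⬝ᵥ (D * R2 * D) *ᵥ v).re with hq11
  -- realness facts
  have realP : star v ⬝ᵥ R1 *ᵥ v = (p : ℂ) := by
    have h := quad_conj R1 v
    rw [hermR1] at h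
    rw [hp]
    exact (Complex.conj_eq_iff_re.mp h).symm ▸ rfl
  have realQ : star v ⬝ᵥ R2 *ᵥ v = (q : ℂ) := by
    have h := quad_conj R2 v
    rw [hermR2] at h
    rw [hq]
    exact (Complex.conj_eq_iff_re.mp h).symm ▸ rfl
  have realP11 : star v ⬝ᵥ (D * R1 * D) *ᵥ v = (p11 : ℂ) := by
    have h := quad_conj (D * R1 * D) v
    rw [show (D * R1 * D)ᴴ = D * R1 * D by
      simp only [conjTranspose_mul, hermR1, hDH, Matrix.mul_assoc]] at h
    exact (Complex.conj_eq_iff_re.mp h).symm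
  have realQ11 : star v ⬝ᵥ (D * R2 * D) *ᵥ v = (q11 : ℂ) := by
    have h := quad_conj (D * R2 * D) v
    rw [show (D * R2 * D)ᴴ = D * R2 * D by
      simp only [conjTranspose_mul, hermR2, hDH, Matrix.mul_assoc]] at h
    exact (Complex.conj_eq_iff_re.mp h).symm
  have starP1 : star v ⬝ᵥ (R1 * D) *ᵥ v = star P1 := by
    have h := quad_conj (D * R1) v
    rw [show (D * R1)ᴴ = R1 * D by simp only [conjTranspose_mul, hermR1, hDH]] at h
    exact h.symm
  have starQ1 : star v ⬝ᵥ (R2 * D) *ᵥ v = star Q1 := by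
    have h := quad_conj (D * R2) v
    rw [show (D * R2)ᴴ = R2 * D by simp only [conjTranspose_mul, hermR2, hDH]] at h
    exact h.symm
  -- dot products involving b and bdot
  have hbb : star b ⬝ᵥ b = (p : ℂ) := by
    rw [hb, core_s, f1, realP]
  have hb2 : star b ⬝ᵥ bdot = κ * star P1 := by
    rw [hb, hbdot, dotProduct_smul, smul_eq_mul, core_s, f2, starP1]
  have hb3 : star bdot ⬝ᵥ b = star κ * P1 := by
    rw [hb, hbdot, star_smul, smul_dotProduct, smul_eq_mul, core_s, f3, hP1]
  have hb4 : star bdot ⬝ᵥ bdot = star κ * κ * (p11 : ℂ) := by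
    rw [hbdot, star_smul, smul_dotProduct, dotProduct_smul, smul_eq_mul, smul_eq_mul,
      core_s, f4, realP11]
    ring
  have hr1 : b ⬝ᵥ Rx *ᵥ star b = (q : ℂ) := by
    rw [hb, core_r, g1, realQ, Complex.star_def, Complex.conj_ofReal]
  have hr2 : b ⬝ᵥ Rx *ᵥ star bdot = star κ * Q1 := by
    rw [hb, hbdot, star_smul, mulVec_smul, dotProduct_smul, smul_eq_mul, core_r, g2,
      starQ1, star_star]
  have hr3 : bdot ⬝ᵥ Rx *ᵥ star b = κ * star Q1 := by
    rw [hb, hbdot, smul_dotProduct, smul_eq_mul, core_r, g3, hQ1]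
  have hr4 : bdot ⬝ᵥ Rx *ᵥ star bdot = κ * star κ * (q11 : ℂ) := by
    rw [hbdot, star_smul, mulVec_smul, smul_dotProduct, dotProduct_smul, smul_eq_mul,
      smul_eq_mul, core_r, g4, realQ11]
    rw [show star ((q11:ℝ):ℂ) = ((q11:ℝ):ℂ) from by rw [Complex.star_def, Complex.conj_ofReal]]
    ring
  -- trace computations
  have T1 : Matrix.trace (B * Rx * Bᴴ) = (q : ℂ) * (p : ℂ) := by
    rw [hB, tr_helper, hr1, hbb]
  have T2 : Matrix.trace (B * Rx * Bdotᴴ)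
      = star κ * ((q : ℂ) * P1 + (p : ℂ) * Q1) := by
    rw [hB, hBdot, conjTranspose_add, Matrix.mul_add, Matrix.trace_add, tr_helper,
      tr_helper, hr1, hr2, hb3, hbb]
    ring
  have T3 : Matrix.trace (Bdot * Rx * Bdotᴴ)
      = star κ * κ * ((q : ℂ) * (p11 : ℂ) + (p : ℂ) * (q11 : ℂ)
          + Q1 * star P1 + star Q1 * P1) := by
    rw [hBdot, conjTranspose_add, Matrix.add_mul, Matrix.add_mul, Matrix.mul_add,
      Matrix.mul_add, Matrix.trace_add, Matrix.trace_add, Matrix.trace_add,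
      tr_helper, tr_helper, tr_helper, tr_helper,
      hr1, hr2, hr3, hr4, hbb, hb2, hb3, hb4]
    ring
  -- |κ|²
  set K : ℝ := 4 * Real.pi ^ 2 * d ^ 2 * Real.cos θ ^ 2 / lmb ^ 2 with hK
  have hnκ : Complex.normSq κ = K := by
    rw [hκ]
    have : Complex.I * (2 * (Real.pi : ℂ) * ((d : ℂ) / (lmb : ℂ)) * (Real.cos θ : ℂ))
        = Complex.I * (((2 * Real.pi * (d / lmb) * Real.cos θ : ℝ)) : ℂ) := by
      push_cast; ring
    rw [this, Complex.normSq_mul, Complex.normSq_I, Complex.normSq_ofReal, one_mul, hK]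
    field_simp
    ring
  -- assemble
  rw [T1, T2, T3]
  simp only [Complex.star_def]
  rw [Complex.sq_norm, Complex.normSq_mul, Complex.normSq_conj, hnκ]
  rw [show (starRingEnd ℂ) κ * κ = (K : ℂ) from by
    rw [mul_comm, Complex.mul_conj, hnκ]]
  simp only [Complex.sq_norm]
  simp only [Complex.normSq_apply, Complex.add_re, Complex.mul_re, Complex.mul_im,
    Complex.add_im, Complex.ofReal_re, Complex.ofReal_im,
    Complex.conj_re, Complex.conj_im]
  field_simp [hp0.ne', hq0.ne']
  ring
end

section
/- Suppose rank(G) = 1. Let a ∈ ℂ^N be arbitrary (playing the role of the steering vector and its derivative direction), let Φ = diag(v) for v ∈ ℂ^N, let b = G^T Φ^T a, let ḃ = G^T w for any w ∈ ℂ^N, and set B = b b^T and Ḃ = ḃ b^T + b ḃ^T. Then the Fisher information matrix F ∈ ℝ^{3×3} (defined in the context from B, Ḃ, Rx, α, T, σ²) is singular, i.e., F is not invertible, for every Hermitian positive semidefinite Rx, every α ∈ ℂ, every positive integer T, and every σ² > 0. (Proposition 1, forward direction: when there is only a single path between AP and IRS, the target's DoA is not estimable and CRLB(θ) = ∞.)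 -/
open Matrix
open scoped ComplexOrder

/-- Proposition 1 (forward direction): if the AP-IRS channel `G` has rank one,
then the Fisher information matrix is singular for every choice of transmit
covariance `Rx`, channel coefficient `α`, dwell time `T`, and noise power `σ²`. -/
theorem fim_singular_of_rank_one {N M : ℕ} (G : Matrix (Fin N) (Fin M) ℂ)
    (hG : G.rank = 1) (a v w : Fin N → ℂ)
    (Φ : Matrix (Fin N) (Fin N) ℂ) (hΦ : Φ = Matrix.diagonal v)
    (b bdot : Fin M → ℂ)
    (hb : b = (Gᵀ * Φᵀ).mulVec a) (hbdot : bdot = Gᵀ.mulVec w)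
    (B Bdot : Matrix (Fin M) (Fin M) ℂ)
    (hB : B = Matrix.vecMulVec b b)
    (hBdot : Bdot = Matrix.vecMulVec bdot b + Matrix.vecMulVec b bdot)
    (Rx : Matrix (Fin M) (Fin M) ℂ) (hRxH : Rx.IsHermitian) (hRx : Rx.PosSemidef)
    (α : ℂ) (T : ℕ) (hT : 0 < T) (σ2 : ℝ) (hσ2 : 0 < σ2) :
    ¬ IsUnit (FIM B Bdot Rx α T σ2) := by
  suffices hdet : (FIM B Bdot Rx α T σ2).det = 0 by
    intro hu
    rw [Matrix.isUnit_iff_isUnit_det, hdet] at hu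
    exact not_isUnit_zero hu
  -- rank of Gᵀ is one
  have hrank : Gᵀ.rank = 1 := by rw [Matrix.rank_transpose]; exact hG
  rw [Matrix.rank] at hrank
  obtain ⟨g, hg0, hgall⟩ := (finrank_eq_one_iff' (K := ℂ)).mp hrank
  have hbmem : b ∈ LinearMap.range Gᵀ.mulVecLin :=
    ⟨Φᵀ.mulVec a, by rw [hb, Matrix.mulVecLin_apply, Matrix.mulVec_mulVec]⟩
  have hbdmem : bdot ∈ LinearMap.range Gᵀ.mulVecLin :=
    ⟨w, by rw [hbdot, Matrix.mulVecLin_apply]⟩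
  obtain ⟨β, hβ⟩ := hgall ⟨b, hbmem⟩
  obtain ⟨γ, hγ⟩ := hgall ⟨bdot, hbdmem⟩
  have hbg : b = β • (g : Fin M → ℂ) := by
    have := congrArg (Subtype.val) hβ; exact this.symm
  have hbdg : bdot = γ • (g : Fin M → ℂ) := by
    have := congrArg (Subtype.val) hγ; exact this.symm
  by_cases hβ0 : β = 0
  · -- b = 0, so B = 0 and Bdot = 0
    have hb0 : b = 0 := by rw [hbg, hβ0, zero_smul]
    have hB0 : B = 0 := by
      rw [hB, hb0]; ext i j; simp [Matrix.vecMulVec_apply]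
    have hBd0 : Bdot = 0 := by
      rw [hBdot, hb0]; ext i j; simp [Matrix.vecMulVec_apply]
    simp [FIM, hB0, hBd0, Matrix.det_fin_three]
  · -- bdot = c • b
    set c : ℂ := γ / β with hc
    have hcb : bdot = c • b := by
      rw [hbdg, hbg, smul_smul, hc, div_mul_cancel₀ _ hβ0]
    have hBd : Bdot = (2 * c) • B := by
      rw [hBdot, hB, hcb]
      ext i j
      simp [Matrix.vecMulVec_apply, Matrix.smul_apply, smul_eq_mul]
      ring
    set t : ℂ := Matrix.trace (B * Rx * Bᴴ) with hts
    have h1 : Matrix.trace (Bdot * Rx * Bdotᴴ) = (2 * c) * (starRingEnd ℂ) (2 * c) * t := by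
      rw [hBd]
      simp [Matrix.conjTranspose_smul, Matrix.smul_mul, Matrix.mul_smul, smul_eq_mul, hts,
        _root_.map_mul, Complex.conj_ofNat]
      ring
    have h2 : Matrix.trace (B * Rx * Bdotᴴ) = (starRingEnd ℂ) (2 * c) * t := by
      rw [hBd]
      simp [Matrix.conjTranspose_smul, Matrix.mul_smul, smul_eq_mul, hts,
        _root_.map_mul, Complex.conj_ofNat]
    have htH : (B * Rx * Bᴴ)ᴴ = B * Rx * Bᴴ := by
      simp [Matrix.conjTranspose_mul, hRxH.eq, Matrix.mul_assoc]
    have htim : t.im = 0 := by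
      have hst := Matrix.trace_conjTranspose (B * Rx * Bᴴ)
      rw [htH] at hst
      exact Complex.conj_eq_iff_im.mp (hts ▸ hst.symm)
    simp only [FIM, Matrix.det_fin_three, h1, h2]
    simp only [Matrix.cons_val', Matrix.cons_val_zero, Matrix.cons_val_one, Matrix.head_cons,
      Matrix.empty_val', Matrix.cons_val_fin_one, Matrix.head_fin_const, Matrix.of_apply,
      Matrix.cons_val_two, Matrix.tail_cons]
    simp only [Complex.sq_norm, Complex.normSq_apply, Complex.mul_re, Complex.mul_im,
      Complex.conj_re, Complex.conj_im, _root_.map_mul, htim, Complex.ofReal_re, Complex.ofReal_im,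
      Complex.mul_re, Complex.mul_im]
    ring
end

section
/- Let b, ḃ ∈ ℂ^M with b ≠ 0 and {b, ḃ} linearly independent over ℂ, and set B = b b^T, Ḃ = ḃ b^T + b ḃ^T. Let Rx ∈ ℂ^{M×M} be Hermitian positive definite, α ∈ ℂ with α ≠ 0, T a positive integer, and σ² > 0. Then the Fisher information matrix F ∈ ℝ^{3×3} (defined in the context) is invertible; equivalently, tr(B Rx B^H) > 0 and tr(Ḃ Rx Ḃ^H) − |tr(B Rx Ḃ^H)|²/tr(B Rx B^H) > 0, so the CRLB for estimating θ is finite. (Proposition 1, converse direction: when the AP-IRS channel has more than one path, so that b = G^T A v and its angular derivative ḃ can be linearly independent, the FIM is invertible and the DoA is estimable.) -/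
open Matrix
open scoped ComplexOrder

private lemma trace_mul_mul_conjTranspose_pos {M : ℕ} (Rx : Matrix (Fin M) (Fin M) ℂ)
    (hRx : Rx.PosDef) (X : Matrix (Fin M) (Fin M) ℂ) (hX : X ≠ 0) :
    0 < Matrix.trace (X * Rx * Xᴴ) := by
  have key : ∀ i, (X * Rx * Xᴴ) i i
      = dotProduct (star (fun k => star (X i k))) (Rx *ᵥ (fun k => star (X i k))) := by
    intro i
    simp only [mul_apply, conjTranspose_apply, dotProduct, mulVec, Pi.star_apply, star_star]
    simp only [Finset.sum_mul, Finset.mul_sum]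
    rw [Finset.sum_comm]
    congr 1; ext j; congr 1; ext k; ring
  rw [Matrix.trace]
  obtain ⟨i0, j0, hij⟩ : ∃ i j, X i j ≠ 0 := by
    by_contra h
    push_neg at h
    exact hX (by ext i j; simpa using h i j)
  apply Finset.sum_pos'
  · intro i _
    rw [Matrix.diag_apply, key]
    exact hRx.posSemidef.dotProduct_mulVec_nonneg _
  · refine ⟨i0, Finset.mem_univ _, ?_⟩
    rw [Matrix.diag_apply, key]
    apply hRx.dotProduct_mulVec_pos
    intro h
    exact hij (by simpa using congrFun h j0)

private lemma star_trace_mul_mul {M : ℕ} (Rx : Matrix (Fin M) (Fin M) ℂ)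
    (hRxH : Rx.IsHermitian) (X Y : Matrix (Fin M) (Fin M) ℂ) :
    star (Matrix.trace (X * Rx * Yᴴ)) = Matrix.trace (Y * Rx * Xᴴ) := by
  rw [← Matrix.trace_conjTranspose]
  simp only [conjTranspose_mul, conjTranspose_conjTranspose, hRxH.eq, Matrix.mul_assoc]

/-- Proposition 1 (converse direction): if `b ≠ 0` and `{b, ḃ}` are linearly
independent, `Rx` is Hermitian positive definite, `α ≠ 0`, `T ≥ 1`, `σ² > 0`,
then the Fisher information matrix is invertible, and equivalently the CRLB
denominator quantities are positive, so the CRLB for estimating θ is finite. -/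
theorem fim_invertible_of_linearIndependent {M : ℕ} (b bdot : Fin M → ℂ)
    (hb : b ≠ 0) (hli : LinearIndependent ℂ ![b, bdot])
    (B Bdot : Matrix (Fin M) (Fin M) ℂ)
    (hB : B = Matrix.vecMulVec b b)
    (hBdot : Bdot = Matrix.vecMulVec bdot b + Matrix.vecMulVec b bdot)
    (Rx : Matrix (Fin M) (Fin M) ℂ) (hRxH : Rx.IsHermitian) (hRx : Rx.PosDef)
    (α : ℂ) (hα : α ≠ 0) (T : ℕ) (hT : 0 < T) (σ2 : ℝ) (hσ2 : 0 < σ2) :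
    IsUnit (FIM B Bdot Rx α T σ2) ∧
      0 < (Matrix.trace (B * Rx * Bᴴ)).re ∧
      0 < (Matrix.trace (Bdot * Rx * Bdotᴴ)).re
          - ‖Matrix.trace (B * Rx * Bdotᴴ)‖ ^ 2
            / (Matrix.trace (B * Rx * Bᴴ)).re := by
  -- pick j0 with b j0 ≠ 0
  obtain ⟨j0, hj0⟩ : ∃ j, b j ≠ 0 := by
    by_contra h; push_neg at h; exact hb (funext fun j => h j)
  -- B ≠ 0
  have hBne : B ≠ 0 := by
    intro h
    have := congrFun (congrFun (hB ▸ h) j0) j0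
    simp [Matrix.vecMulVec_apply] at this
    exact hj0 this
  -- Bdot is never a scalar multiple of B
  have key_indep : ∀ c : ℂ, Bdot ≠ c • B := by
    intro c h
    have hpair := LinearIndependent.pair_iff.mp hli (bdot j0 - c * b j0) (b j0)
    have hz : (bdot j0 - c * b j0) • b + (b j0) • bdot = 0 := by
      funext i
      have := congrFun (congrFun (hBdot ▸ hB ▸ h) i) j0
      simp only [Matrix.add_apply, Matrix.smul_apply, Matrix.vecMulVec_apply,
        smul_eq_mul] at this
      simp only [Pi.add_apply, Pi.smul_apply, Pi.zero_apply, smul_eq_mul]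
      linear_combination this
    exact hj0 (hpair hz).2
  have hBdotne : Bdot ≠ 0 := by
    intro h; exact key_indep 0 (by simpa using h)
  -- notations
  set u := Matrix.trace (B * Rx * Bᴴ) with hu_def
  set d := Matrix.trace (Bdot * Rx * Bdotᴴ) with hd_def
  set t := Matrix.trace (Bdot * Rx * Bᴴ) with ht_def
  have hupos : 0 < u := trace_mul_mul_conjTranspose_pos Rx hRx B hBne
  have hdpos : 0 < d := trace_mul_mul_conjTranspose_pos Rx hRx Bdot hBdotne
  have hur : 0 < u.re := (Complex.lt_def.mp hupos).1
  have huim : u.im = 0 := ((Complex.lt_def.mp hupos).2).symm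
  have hdr : 0 < d.re := (Complex.lt_def.mp hdpos).1
  have hdim : d.im = 0 := ((Complex.lt_def.mp hdpos).2).symm
  have hureal : u = (u.re : ℂ) := Complex.ext rfl (by simp [huim])
  have hdreal : d = (d.re : ℂ) := Complex.ext rfl (by simp [hdim])
  -- t' in statement is star t
  have ht' : Matrix.trace (B * Rx * Bdotᴴ) = star t :=
    (star_trace_mul_mul Rx hRxH Bdot B).symm
  -- the Cauchy-Schwarz vector
  set Z : Matrix (Fin M) (Fin M) ℂ := u • Bdot - t • B with hZ_def
  have hZne : Z ≠ 0 := by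
    intro h
    apply key_indep (u⁻¹ * t)
    have hu0 : u ≠ 0 := ne_of_gt hupos
    have : u • Bdot = t • B := by rwa [sub_eq_zero] at h
    calc Bdot = (u⁻¹ * u) • Bdot := by rw [inv_mul_cancel₀ hu0, one_smul]
      _ = u⁻¹ • (u • Bdot) := (smul_smul _ _ _).symm
      _ = u⁻¹ • (t • B) := by rw [this]
      _ = (u⁻¹ * t) • B := smul_smul _ _ _
  have hZpos : 0 < Matrix.trace (Z * Rx * Zᴴ) := trace_mul_mul_conjTranspose_pos Rx hRx Z hZne
  -- expand the trace
  have hst : star (Matrix.trace (B * Rx * Bdotᴴ)) = t := by rw [ht']; exact star_star t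
  have hexpand : Matrix.trace (Z * Rx * Zᴴ) = u * (u * d - t * star t) := by
    have e1 : Zᴴ = star u • Bdotᴴ - star t • Bᴴ := by
      rw [hZ_def, conjTranspose_sub, conjTranspose_smul, conjTranspose_smul]
    rw [hZ_def, e1]
    simp only [Matrix.sub_mul, Matrix.mul_sub, Matrix.smul_mul, Matrix.mul_smul,
      Matrix.trace_sub, Matrix.trace_smul, smul_smul, smul_eq_mul]
    rw [← ht_def, ← hd_def, ← hu_def, ht']
    have hsu : star u = u := by rw [hureal]; simp
    rw [hsu]
    ring
  -- real-part inequality: u.re * d.re - normSq t > 0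
  have hkey : 0 < u.re * d.re - Complex.normSq t := by
    have h1 : Matrix.trace (Z * Rx * Zᴴ)
        = ((u.re * (u.re * d.re - Complex.normSq t) : ℝ) : ℂ) := by
      rw [hexpand, hureal, hdreal]
      rw [Complex.star_def, Complex.mul_conj]
      push_cast
      simp only [Complex.ofReal_re]
      try ring
    have := hZpos
    rw [h1] at this
    have h2 : 0 < u.re * (u.re * d.re - Complex.normSq t) := by
      exact_mod_cast (Complex.lt_def.mp this).1
    nlinarith [hur]
  have habs2 : ‖Matrix.trace (B * Rx * Bdotᴴ)‖ ^ 2 = Complex.normSq t := by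
    rw [ht', Complex.sq_norm]
    simp [Complex.star_def, Complex.normSq_conj]
  refine ⟨?_, hur, ?_⟩
  · -- invertibility of FIM
    rw [Matrix.isUnit_iff_isUnit_det]
    refine isUnit_iff_ne_zero.mpr (ne_of_gt ?_)
    have hTpos : (0:ℝ) < (T:ℝ) := by exact_mod_cast hT
    have hk : (0:ℝ) < 2 * T / σ2 := by positivity
    have hα2 : 0 < Complex.normSq α := Complex.normSq_pos.mpr hα
    have habs : ((starRingEnd ℂ) α * Matrix.trace (B * Rx * Bdotᴴ)).re ^ 2
        + ((starRingEnd ℂ) α * Matrix.trace (B * Rx * Bdotᴴ)).im ^ 2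
        = Complex.normSq α * Complex.normSq t := by
      have : ((starRingEnd ℂ) α * Matrix.trace (B * Rx * Bdotᴴ)).re ^ 2
          + ((starRingEnd ℂ) α * Matrix.trace (B * Rx * Bdotᴴ)).im ^ 2
          = Complex.normSq ((starRingEnd ℂ) α * Matrix.trace (B * Rx * Bdotᴴ)) := by
        rw [Complex.normSq_apply]; ring
      rw [this, _root_.map_mul, Complex.normSq_conj, ht']
      simp [Complex.star_def, Complex.normSq_conj]
    have hdet : (FIM B Bdot Rx α T σ2).det
        = (2 * T / σ2) ^ 3 * Complex.normSq α * u.re * (u.re * d.re - Complex.normSq t) := by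
      simp [FIM, Matrix.det_fin_three, Complex.sq_norm, ht', Complex.star_def, ← hu_def, ← hd_def]
      simp only [Complex.mul_re, Complex.mul_im, Complex.conj_re, Complex.conj_im,
        Complex.normSq_apply]
      ring
    rw [hdet]
    have := mul_pos (mul_pos (mul_pos (pow_pos hk 3) hα2) hur) hkey
    exact this
  · rw [habs2, sub_pos, div_lt_iff₀ hur]
    nlinarith [hkey]
end

section
/- With b = G^T A v, ḃ = κ·G^T A D v for some κ ∈ ℂ, B = b b^T, Ḃ = ḃ b^T + b ḃ^T, R1 = A^H G* G^T A, R2 = A^H G* Rx* G^T A, and Rx ∈ ℂ^{M×M} Hermitian, the following identity holds: tr(Ḃ Rx Ḃ^H) = |κ|² · [ (v^H R2 v)·(v^H D R1 D v) + (v^H R1 v)·(v^H D R2 D v) + 2·Re{ (v^H D R2 v) · conj(v^H D R1 v) } ]. -/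
open Matrix
open scoped ComplexOrder

lemma aux_m1 {M : ℕ} (x y : Fin M → ℂ) (S : Matrix (Fin M) (Fin M) ℂ) :
    vecMulVec x y * S = vecMulVec x (S.vecMul y) := by
  ext i j
  simp [Matrix.mul_apply, vecMulVec_apply, Matrix.vecMul, dotProduct, Finset.mul_sum, mul_assoc]

lemma aux_m2 {M : ℕ} (x u z w : Fin M → ℂ) :
    vecMulVec x u * vecMulVec z w = (u ⬝ᵥ z) • vecMulVec x w := by
  ext i j
  simp only [Matrix.mul_apply, vecMulVec_apply, Matrix.smul_apply, dotProduct, Finset.sum_mul,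
    smul_eq_mul, Finset.mul_sum]
  refine Finset.sum_congr rfl fun k _ => by ring

lemma aux_m3 {M : ℕ} (p q : Fin M → ℂ) : Matrix.trace (vecMulVec p q) = p ⬝ᵥ q := by
  simp [Matrix.trace, Matrix.diag, vecMulVec_apply, dotProduct]

lemma aux_trace {M : ℕ} (x y z w : Fin M → ℂ) (S : Matrix (Fin M) (Fin M) ℂ) :
    Matrix.trace (vecMulVec x y * S * vecMulVec z w)
      = (y ⬝ᵥ S.mulVec z) * (w ⬝ᵥ x) := by
  rw [aux_m1, aux_m2, trace_smul, aux_m3, smul_eq_mul, ← dotProduct_mulVec,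
    dotProduct_comm x w]

lemma aux_quad {N M : ℕ} (v : Fin N → ℂ) (Q P : Matrix (Fin M) (Fin N) ℂ)
    (S : Matrix (Fin M) (Fin M) ℂ) :
    star v ⬝ᵥ (Qᴴ * S * P).mulVec v
      = star (Q.mulVec v) ⬝ᵥ S.mulVec (P.mulVec v) := by
  rw [← mulVec_mulVec, ← mulVec_mulVec, dotProduct_mulVec, ← star_mulVec]

lemma aux_quad2 {N M : ℕ} (v : Fin N → ℂ) (Q P : Matrix (Fin M) (Fin N) ℂ) :
    star v ⬝ᵥ (Qᴴ * P).mulVec v = star (Q.mulVec v) ⬝ᵥ P.mulVec v := by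
  rw [← mulVec_mulVec, dotProduct_mulVec, ← star_mulVec]

lemma aux_ct {M : ℕ} (x y : Fin M → ℂ) :
    (vecMulVec x y)ᴴ = vecMulVec (star y) (star x) := by
  ext i j
  simp [conjTranspose_apply, vecMulVec_apply, mul_comm]

lemma aux_star_dot {M : ℕ} (u t : Fin M → ℂ) : star (u ⬝ᵥ t) = star u ⬝ᵥ star t := by
  simp [dotProduct, star_sum]

/-- With `b = Gᵀ A v`, `ḃ = κ·Gᵀ A D v`, `B = b bᵀ`, `Ḃ = ḃ bᵀ + b ḃᵀ`,
`R1 = Aᴴ G* Gᵀ A`, `R2 = Aᴴ G* Rx* Gᵀ A`, and `Rx` Hermitian: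
`tr(Ḃ Rx Ḃᴴ) = |κ|²·[(vᴴ R2 v)(vᴴ D R1 D v) + (vᴴ R1 v)(vᴴ D R2 D v)
+ 2 Re{(vᴴ D R2 v)·conj(vᴴ D R1 v)}]`. -/
theorem trace_Bdot_Rx_BdotH_identity {N M : ℕ}
    (a v : Fin N → ℂ) (G : Matrix (Fin N) (Fin M) ℂ) (κ : ℂ)
    (Rx : Matrix (Fin M) (Fin M) ℂ) (hRxH : Rx.IsHermitian) (hRx : Rx.PosSemidef)
    (A D : Matrix (Fin N) (Fin N) ℂ)
    (hA : A = Matrix.diagonal a)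
    (hD : D = Matrix.diagonal (fun n : Fin N => ((n : ℕ) : ℂ)))
    (b bdot : Fin M → ℂ)
    (hb : b = (Gᵀ * A).mulVec v)
    (hbdot : bdot = κ • (Gᵀ * A * D).mulVec v)
    (B Bdot : Matrix (Fin M) (Fin M) ℂ)
    (hB : B = Matrix.vecMulVec b b)
    (hBdot : Bdot = Matrix.vecMulVec bdot b + Matrix.vecMulVec b bdot)
    (R1 R2 : Matrix (Fin N) (Fin N) ℂ)
    (hR1 : R1 = Aᴴ * G.map (starRingEnd ℂ) * Gᵀ * A)
    (hR2 : R2 = Aᴴ * G.map (starRingEnd ℂ) * Rx.map (starRingEnd ℂ) * Gᵀ * A) :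
    Matrix.trace (Bdot * Rx * Bdotᴴ)
      = ((‖κ‖ ^ 2 : ℝ) : ℂ) *
          ((star v ⬝ᵥ R2.mulVec v) * (star v ⬝ᵥ (D * R1 * D).mulVec v)
           + (star v ⬝ᵥ R1.mulVec v) * (star v ⬝ᵥ (D * R2 * D).mulVec v)
           + ((2 * ((star v ⬝ᵥ (D * R2).mulVec v) *
                (starRingEnd ℂ) (star v ⬝ᵥ (D * R1).mulVec v)).re : ℝ) : ℂ)) := by
  set P : Matrix (Fin M) (Fin N) ℂ := Gᵀ * A with hP
  set Q : Matrix (Fin M) (Fin N) ℂ := Gᵀ * A * D with hQ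
  set S' : Matrix (Fin M) (Fin M) ℂ := Rx.map (starRingEnd ℂ) with hS'
  set bv : Fin M → ℂ := P.mulVec v with hbv
  set c : Fin M → ℂ := Q.mulVec v with hc
  have hGt : (Gᵀ)ᴴ = G.map (starRingEnd ℂ) := by
    ext i j; simp [conjTranspose_apply, Matrix.map_apply]
  have hDH : Dᴴ = D := by
    rw [hD, diagonal_conjTranspose]
    refine congrArg Matrix.diagonal ?_
    funext n; simp [Pi.star_apply]
  have hPH : Pᴴ = Aᴴ * G.map (starRingEnd ℂ) := by
    rw [hP, conjTranspose_mul, hGt]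
  have hQH : Qᴴ = D * Pᴴ := by
    rw [hQ, hP, conjTranspose_mul, hDH]
  -- matrix identities
  have hR1P : R1 = Pᴴ * P := by
    rw [hR1, hPH, hP]; simp only [Matrix.mul_assoc]
  have hR2P : R2 = Pᴴ * S' * P := by
    rw [hR2, hPH, hP, hS']; simp only [Matrix.mul_assoc]
  have hDR1 : D * R1 = Qᴴ * P := by
    rw [hR1P, hQH]; simp only [Matrix.mul_assoc]
  have hDR1D : D * R1 * D = Qᴴ * Q := by
    rw [hR1P, hQH, hQ, hP]; simp only [Matrix.mul_assoc]
  have hDR2 : D * R2 = Qᴴ * S' * P := by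
    rw [hR2P, hQH]; simp only [Matrix.mul_assoc]
  have hDR2D : D * R2 * D = Qᴴ * S' * Q := by
    rw [hR2P, hQH, hQ, hP]; simp only [Matrix.mul_assoc]
  -- scalar identities for RHS
  have e1 : star v ⬝ᵥ R2.mulVec v = star bv ⬝ᵥ S'.mulVec bv := by
    rw [hR2P, aux_quad]
  have e2 : star v ⬝ᵥ (D * R1 * D).mulVec v = star c ⬝ᵥ c := by
    rw [hDR1D, aux_quad2]
  have e3 : star v ⬝ᵥ R1.mulVec v = star bv ⬝ᵥ bv := by
    rw [hR1P, aux_quad2]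
  have e4 : star v ⬝ᵥ (D * R2 * D).mulVec v = star c ⬝ᵥ S'.mulVec c := by
    rw [hDR2D, aux_quad]
  have e5 : star v ⬝ᵥ (D * R2).mulVec v = star c ⬝ᵥ S'.mulVec bv := by
    rw [hDR2, aux_quad]
  have e6 : star v ⬝ᵥ (D * R1).mulVec v = star c ⬝ᵥ bv := by
    rw [hDR1, aux_quad2]
  -- bridges using hermiticity of Rx
  have hmapT : S' = Rxᵀ := by
    rw [hS']; ext i j
    simpa [Matrix.map_apply, Matrix.transpose_apply] using hRxH.apply j i
  have Lsym : ∀ p q : Fin M → ℂ, star p ⬝ᵥ S'.mulVec q = q ⬝ᵥ Rx.mulVec (star p) := by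
    intro p q
    rw [hmapT, mulVec_transpose, dotProduct_comm, ← dotProduct_mulVec]
  have hstarS : ∀ u : Fin M → ℂ, star (S'.mulVec u) = Rx.mulVec (star u) := by
    intro u; funext i
    simp [Matrix.mulVec, dotProduct, Matrix.map_apply, star_sum, hS', Complex.conj_conj]
  have bridge1 : bv ⬝ᵥ Rx.mulVec (star bv) = star bv ⬝ᵥ S'.mulVec bv := (Lsym bv bv).symm
  have bridge2 : c ⬝ᵥ Rx.mulVec (star c) = star c ⬝ᵥ S'.mulVec c := (Lsym c c).symm
  have bridge3 : bv ⬝ᵥ Rx.mulVec (star c) = star c ⬝ᵥ S'.mulVec bv := (Lsym c bv).symm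
  have bridge4 : c ⬝ᵥ Rx.mulVec (star bv) = star (star c ⬝ᵥ S'.mulVec bv) := by
    rw [aux_star_dot, star_star, hstarS]
  have bridge5 : star bv ⬝ᵥ c = star (star c ⬝ᵥ bv) := by
    rw [aux_star_dot, star_star, dotProduct_comm]
  -- LHS expansion
  have hL : Matrix.trace (Bdot * Rx * Bdotᴴ)
      = (bv ⬝ᵥ Rx.mulVec (star bv)) * (star κ * (κ * (star c ⬝ᵥ c)))
        + star κ * (bv ⬝ᵥ Rx.mulVec (star c)) * (κ * (star bv ⬝ᵥ c))
        + κ * (c ⬝ᵥ Rx.mulVec (star bv)) * (star κ * (star c ⬝ᵥ bv))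
        + κ * (star κ * (c ⬝ᵥ Rx.mulVec (star c))) * (star bv ⬝ᵥ bv) := by
    rw [hBdot, hbdot, hb]
    simp only [conjTranspose_add, aux_ct, Matrix.add_mul, Matrix.mul_add, trace_add,
      aux_trace, star_smul, smul_dotProduct, dotProduct_smul, mulVec_smul, smul_eq_mul,
      star_trivial]
    ring
  rw [hL, e1, e2, e3, e4, e5, e6, bridge1, bridge2, bridge3, bridge4, bridge5]
  have hkk : ((‖κ‖ ^ 2 : ℝ) : ℂ) = κ * star κ := by
    rw [Complex.sq_norm]
    exact (Complex.mul_conj κ).symm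
  have hre : ((2 * ((star c ⬝ᵥ S'.mulVec bv) * (starRingEnd ℂ) (star c ⬝ᵥ bv)).re : ℝ) : ℂ)
      = (star c ⬝ᵥ S'.mulVec bv) * star (star c ⬝ᵥ bv)
        + star (star c ⬝ᵥ S'.mulVec bv) * (star c ⬝ᵥ bv) := by
    rw [← Complex.add_conj]
    simp [_root_.map_mul, Complex.conj_conj]
  rw [hre, hkk]
  ring
end
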